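/- Let X be a closed symplectic manifold (X, ω) carrying a nontrivial Hamiltonian S¹-action with moment map μ : X → ℝ. Then there exists a class α ∈ π₂(X) whose image ᾱ ∈ H₂(X;ℤ) satisfies ∫_ᾱ ω > 0. In particular, a closed symplectically aspherical manifold admits no nontrivial Hamiltonian S¹-action. -/

import Mathlib

open scoped Manifold
open Filter Set

set_option linter.unusedSectionVars false
set_option maxHeartbeats 1000000
section Aux
variable {E : Type*} [NormedAddCommGroup E] [NormedSpace ℝ E]
  {M : Type*} [TopologicalSpace M] [ChartedSpace E M]
  [IsManifold 𝓘(ℝ, E) (⊤ : ℕ∞) M]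

/-- A smooth curve in a manifold with vanishing derivative is constant. -/
theorem aux_const_of_mfderiv_zero [T2Space M] {f : ℝ → M}
    (hf : ContMDiff 𝓘(ℝ, ℝ) 𝓘(ℝ, E) (⊤ : ℕ∞) f)
    (hf' : ∀ t, mfderiv 𝓘(ℝ, ℝ) 𝓘(ℝ, E) f t = 0) (t : ℝ) : f t = f 0 := by
  have hloc : ∀ t₁ : ℝ, ∀ᶠ t in nhds t₁, f t = f t₁ := by
    intro t₁
    set e := extChartAt 𝓘(ℝ, E) (f t₁) with he
    have hU : f ⁻¹' e.source ∈ nhds t₁ :=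
      hf.continuous.continuousAt.preimage_mem_nhds (extChartAt_source_mem_nhds _)
    obtain ⟨ε, hε, hball⟩ := Metric.mem_nhds_iff.mp hU
    have hmem : ∀ s ∈ Metric.ball t₁ ε, f s ∈ e.source := fun s hs => hball hs
    have hg : ∀ s ∈ Metric.ball t₁ ε,
        MDifferentiableAt 𝓘(ℝ, ℝ) 𝓘(ℝ, E) (fun z => e (f z)) s ∧
          mfderiv 𝓘(ℝ, ℝ) 𝓘(ℝ, E) (fun z => e (f z)) s = 0 := by
      intro s hs
      have hfs : MDifferentiableAt 𝓘(ℝ, ℝ) 𝓘(ℝ, E) f s :=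
        (hf s).mdifferentiableAt (by simp)
      have hes : MDifferentiableAt 𝓘(ℝ, E) 𝓘(ℝ, E) e (f s) := by
        apply mdifferentiableAt_extChartAt
        have := hmem s hs
        rwa [he, extChartAt_source] at this
      have hcomp := mfderiv_comp (I := 𝓘(ℝ, ℝ)) (I' := 𝓘(ℝ, E)) (I'' := 𝓘(ℝ, E)) s hes hfs
      constructor
      · exact (hes.comp s hfs : _)
      · show mfderiv 𝓘(ℝ, ℝ) 𝓘(ℝ, E) (e ∘ f) s = 0
        rw [hcomp, hf' s, ContinuousLinearMap.comp_zero]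
    -- g is constant on the ball
    have hconst : ∀ s ∈ Metric.ball t₁ ε, e (f s) = e (f t₁) := by
      intro s hs
      have hball' : Convex ℝ (Metric.ball t₁ ε) := convex_ball t₁ ε
      have hdiff : DifferentiableOn ℝ (fun z => e (f z)) (Metric.ball t₁ ε) := by
        intro z hz
        have := (hg z hz).1
        rw [mdifferentiableAt_iff_differentiableAt] at this
        exact this.differentiableWithinAt
      refine hball'.is_const_of_fderivWithin_eq_zero hdiff ?_ hs (Metric.mem_ball_self hε)
      intro z hz
      rw [fderivWithin_of_isOpen Metric.isOpen_ball hz, ← mfderiv_eq_fderiv]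
      exact (hg z hz).2
    filter_upwards [Metric.ball_mem_nhds t₁ hε] with s hs
    have h1 : e.symm (e (f s)) = f s := e.left_inv (hmem s hs)
    have h2 : e.symm (e (f t₁)) = f t₁ := e.left_inv (mem_extChartAt_source _)
    rw [← h1, hconst s hs, h2]
  have hS : IsClopen {s : ℝ | f s = f 0} := by
    constructor
    · exact isClosed_eq hf.continuous continuous_const
    · rw [isOpen_iff_mem_nhds]
      intro t₁ ht₁
      filter_upwards [hloc t₁] with s hs using hs.trans ht₁
  have := hS.eq_univ ⟨0, rfl⟩
  exact (Set.eq_univ_iff_forall.mp this t)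

/-- At a local extremum of a smooth function on a boundaryless manifold the
differential vanishes. -/
theorem aux_mfderiv_zero_of_extr {f : M → ℝ}
    (hf : ContMDiff 𝓘(ℝ, E) 𝓘(ℝ, ℝ) (⊤ : ℕ∞) f) {y : M} (h : IsLocalExtr f y) :
    mfderiv 𝓘(ℝ, E) 𝓘(ℝ, ℝ) f y = 0 := by
  set e := extChartAt 𝓘(ℝ, E) y with he
  have htarget : e.target ∈ nhds (e y) :=
    (isOpen_extChartAt_target y).mem_nhds (mem_extChartAt_target _)
  have hsymm : ContMDiffAt 𝓘(ℝ, E) 𝓘(ℝ, E) (⊤ : ℕ∞) e.symm (e y) :=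
    (contMDiffOn_extChartAt_symm y).contMDiffAt htarget
  have hfsymm : ContMDiffAt 𝓘(ℝ, E) 𝓘(ℝ, ℝ) (⊤ : ℕ∞) (f ∘ e.symm) (e y) := by
    have : ContMDiffAt 𝓘(ℝ, E) 𝓘(ℝ, ℝ) (⊤ : ℕ∞) f (e.symm (e y)) := by
      rw [e.left_inv (mem_extChartAt_source _)]; exact hf y
    exact this.comp _ hsymm
  have hdiff : DifferentiableAt ℝ (f ∘ e.symm) (e y) := by
    rw [← mdifferentiableAt_iff_differentiableAt]
    exact hfsymm.mdifferentiableAt (by simp)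
  -- local extremum of f ∘ e.symm
  have htends : Filter.Tendsto e.symm (nhds (e y)) (nhds y) := by
    have h1 := continuousAt_extChartAt_symm (I := 𝓘(ℝ, E)) y
    rw [← he] at h1
    unfold ContinuousAt at h1
    rwa [e.left_inv (mem_extChartAt_source y)] at h1
  have hextr : IsLocalExtr (f ∘ e.symm) (e y) := by
    rcases h with h | h
    · left
      show ∀ᶠ w in nhds (e y), (f ∘ e.symm) (e y) ≤ (f ∘ e.symm) w
      filter_upwards [htends.eventually h] with w hw
      simpa [Function.comp, e.left_inv (mem_extChartAt_source y)] using hw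
    · right
      show ∀ᶠ w in nhds (e y), (f ∘ e.symm) w ≤ (f ∘ e.symm) (e y)
      filter_upwards [htends.eventually h] with w hw
      simpa [Function.comp, e.left_inv (mem_extChartAt_source y)] using hw
  have hfd : fderiv ℝ (f ∘ e.symm) (e y) = 0 := hextr.fderiv_eq_zero
  -- now translate back
  have hee : f =ᶠ[nhds y] (f ∘ e.symm) ∘ e := by
    filter_upwards [extChartAt_source_mem_nhds (I := 𝓘(ℝ, E)) y] with z hz
    simp [Function.comp, e.left_inv hz]
  rw [hee.mfderiv_eq]
  have hgd : MDifferentiableAt 𝓘(ℝ, E) 𝓘(ℝ, ℝ) (f ∘ e.symm) (e y) :=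
    hfsymm.mdifferentiableAt (by simp)
  have hed : MDifferentiableAt 𝓘(ℝ, E) 𝓘(ℝ, E) e y := by
    apply mdifferentiableAt_extChartAt
    rw [← extChartAt_source (I := 𝓘(ℝ, E))]
    exact mem_extChartAt_source _
  rw [mfderiv_comp y hgd hed]
  have : mfderiv 𝓘(ℝ, E) 𝓘(ℝ, ℝ) (f ∘ e.symm) (e y) = 0 := by
    rw [mfderiv_eq_fderiv, hfd]; rfl
  rw [this, ContinuousLinearMap.zero_comp]; rfl

end Aux


section Path
variable {E : Type*} [NormedAddCommGroup E] [NormedSpace ℝ E]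
  {M : Type*} [TopologicalSpace M] [ChartedSpace E M]
  [IsManifold 𝓘(ℝ, E) (⊤ : ℕ∞) M]

/-- Smooth path with flat ends. -/
def SPath (E : Type*) [NormedAddCommGroup E] [NormedSpace ℝ E] {M : Type*} [TopologicalSpace M] [ChartedSpace E M] (p q : M) : Prop :=
  ∃ c : ℝ → M, ContMDiff 𝓘(ℝ, ℝ) 𝓘(ℝ, E) (⊤ : ℕ∞) c ∧
    (∀ s : ℝ, s ≤ 0 → c s = p) ∧ (∀ s : ℝ, 1 ≤ s → c s = q)

theorem SPath.refl (p : M) : SPath E p p :=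
  ⟨fun _ => p, contMDiff_const, fun _ _ => rfl, fun _ _ => rfl⟩

theorem SPath.symm {p q : M} (h : SPath E p q) : SPath E q p := by
  obtain ⟨c, hc, h0, h1⟩ := h
  refine ⟨fun s => c (1 - s), ?_, ?_, ?_⟩
  · apply hc.comp
    rw [contMDiff_iff_contDiff]
    fun_prop
  · intro s hs; exact h1 _ (by linarith)
  · intro s hs; exact h0 _ (by linarith)

theorem SPath.trans {p q r : M} (h : SPath E p q) (h' : SPath E q r) : SPath E p r := by
  obtain ⟨c₁, hc₁, h₁0, h₁1⟩ := h
  obtain ⟨c₂, hc₂, h₂0, h₂1⟩ := h'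
  set ρ : ℝ → ℝ := fun s => Real.smoothTransition (4 * s - 1) with hρ
  have hρsm : ContDiff ℝ (↑(⊤ : ℕ∞)) ρ := by
    apply ContDiff.comp (g := Real.smoothTransition)
      (Real.smoothTransition.contDiff (n := ⊤))
    fun_prop
  have hρ0 : ∀ s : ℝ, s ≤ 1/4 → ρ s = 0 := fun s hs =>
    Real.smoothTransition.zero_of_nonpos (by linarith)
  have hρ1 : ∀ s : ℝ, 1/2 ≤ s → ρ s = 1 := fun s hs =>
    Real.smoothTransition.one_of_one_le (by linarith)
  refine ⟨fun s => if s ≤ 1/2 then c₁ (ρ (2 * s)) else c₂ (ρ (2 * s - 1)), ?_, ?_, ?_⟩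
  · intro s₀
    have hsm₁ : ContMDiffAt 𝓘(ℝ, ℝ) 𝓘(ℝ, E) (⊤ : ℕ∞) (fun s => c₁ (ρ (2 * s))) s₀ := by
      apply (hc₁.comp _).contMDiffAt
      rw [contMDiff_iff_contDiff]
      exact ContDiff.comp (g := ρ) (f := fun s : ℝ => 2 * s) hρsm (by fun_prop)
    have hsm₂ : ContMDiffAt 𝓘(ℝ, ℝ) 𝓘(ℝ, E) (⊤ : ℕ∞) (fun s => c₂ (ρ (2 * s - 1))) s₀ := by
      apply (hc₂.comp _).contMDiffAt
      rw [contMDiff_iff_contDiff]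
      exact ContDiff.comp (g := ρ) (f := fun s : ℝ => 2 * s - 1) hρsm (by fun_prop)
    rcases lt_trichotomy s₀ (1/2 : ℝ) with hlt | heq | hgt
    · apply hsm₁.congr_of_eventuallyEq
      filter_upwards [eventually_lt_nhds hlt] with s hs
      rw [if_pos hs.le]
    · have : ∀ s ∈ Ioo (3/8 : ℝ) (5/8 : ℝ),
          (if s ≤ 1/2 then c₁ (ρ (2 * s)) else c₂ (ρ (2 * s - 1))) = q := by
        intro s hs
        by_cases hs2 : s ≤ 1/2
        · rw [if_pos hs2, hρ1 _ (by nlinarith [hs.1]), h₁1 1 le_rfl]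
        · rw [if_neg hs2, hρ0 _ (by nlinarith [hs.2]), h₂0 0 le_rfl]
      apply (contMDiffAt_const (c := q)).congr_of_eventuallyEq
      filter_upwards [Ioo_mem_nhds (show (3/8 : ℝ) < s₀ by rw [heq]; norm_num)
        (show s₀ < (5/8 : ℝ) by rw [heq]; norm_num)] with s hs
      exact this s hs
    · apply hsm₂.congr_of_eventuallyEq
      filter_upwards [eventually_gt_nhds hgt] with s hs
      rw [if_neg (not_le.mpr hs)]
  · intro s hs
    show (if s ≤ 1/2 then c₁ (ρ (2 * s)) else c₂ (ρ (2 * s - 1))) = p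
    rw [if_pos (by linarith : s ≤ 1/2), hρ0 _ (by linarith), h₁0 0 le_rfl]
  · intro s hs
    show (if s ≤ 1/2 then c₁ (ρ (2 * s)) else c₂ (ρ (2 * s - 1))) = r
    rw [if_neg (not_le.mpr (by linarith : (1:ℝ)/2 < s)), hρ1 _ (by linarith), h₂1 1 le_rfl]

/-- Every point has a neighbourhood of points reachable by a smooth flat path. -/
theorem eventually_spath (y : M) : ∀ᶠ z in nhds y, SPath E y z := by
  set e := extChartAt 𝓘(ℝ, E) y with he
  obtain ⟨ε, hε, hball⟩ := Metric.mem_nhds_iff.mp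
    ((isOpen_extChartAt_target y).mem_nhds (mem_extChartAt_target (I := 𝓘(ℝ, E)) y))
  have hsrc : e.source ∈ nhds y := extChartAt_source_mem_nhds y
  have hpre : e ⁻¹' Metric.ball (e y) ε ∈ nhds y :=
    (continuousAt_extChartAt y).preimage_mem_nhds (Metric.ball_mem_nhds _ hε)
  filter_upwards [hsrc, hpre] with z hzsrc hzball
  -- the straight segment from e y to e z, reparametrized
  set γ : ℝ → E := fun s => e y + Real.smoothTransition s • (e z - e y) with hγ
  have hseg : ∀ s : ℝ, γ s ∈ Metric.ball (e y) ε := by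
    intro s
    have h1 : dist (γ s) (e y) = ‖Real.smoothTransition s • (e z - e y)‖ := by
      rw [dist_eq_norm]; congr 1; simp [hγ]
    have h2 : ‖Real.smoothTransition s • (e z - e y)‖ ≤ ‖e z - e y‖ := by
      rw [norm_smul, Real.norm_eq_abs, abs_of_nonneg (Real.smoothTransition.nonneg s)]
      nlinarith [Real.smoothTransition.le_one s, norm_nonneg (e z - e y)]
    have h3 : ‖e z - e y‖ < ε := by
      have h3' := hzball
      rw [Set.mem_preimage, Metric.mem_ball, dist_eq_norm] at h3'
      exact h3'
    rw [Metric.mem_ball, h1]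
    exact lt_of_le_of_lt h2 h3
  have hγsm : ContMDiff 𝓘(ℝ, ℝ) 𝓘(ℝ, E) (⊤ : ℕ∞) γ := by
    rw [contMDiff_iff_contDiff, hγ]
    exact contDiff_const.add ((Real.smoothTransition.contDiff (n := ⊤)).smul contDiff_const)
  refine ⟨fun s => e.symm (γ s), ?_, ?_, ?_⟩
  · rw [← contMDiffOn_univ]
    apply ContMDiffOn.comp (t := e.target) (contMDiffOn_extChartAt_symm y) hγsm.contMDiffOn
    intro s _
    exact hball (hseg s)
  · intro s hs
    rw [hγ]; simp only [Real.smoothTransition.zero_of_nonpos hs, zero_smul, add_zero]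
    exact e.left_inv (mem_extChartAt_source y)
  · intro s hs
    rw [hγ]; simp only [Real.smoothTransition.one_of_one_le hs, one_smul]
    rw [add_sub_cancel]
    exact e.left_inv hzsrc

theorem exists_smooth_path {p q : M} (h : q ∈ connectedComponent p) : SPath E p q := by
  have hS : IsClopen {z : M | SPath E p z} := by
    constructor
    · rw [← isOpen_compl_iff, isOpen_iff_mem_nhds]
      intro z₀ hz₀
      filter_upwards [eventually_spath (E := E) z₀] with z hz hzS
      exact hz₀ (hzS.trans hz.symm)
    · rw [isOpen_iff_mem_nhds]
      intro z₀ hz₀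
      filter_upwards [eventually_spath (E := E) z₀] with z hz
      exact hz₀.trans hz
  exact hS.connectedComponent_subset (SPath.refl p) h

end Path


/-- Let `(M, ω)` be a closed symplectic manifold (here: a compact
boundaryless smooth manifold with a smooth nondegenerate antisymmetric `2`-form `ω`,
smoothness expressed by smoothness of all pullbacks along smooth maps), carrying a
nontrivial Hamiltonian `S¹`-action `a : ℝ → M → M` (smooth, additive, `1`-periodic)
with moment map `μ : M → ℝ` satisfying `dμ = -ι_X ω` for the generating vector field
`X x = (d/dt)|₀ a t x`.  Then there exists a spherical class with positive symplectic
area: a smooth map `u` of the cylinder `ℝ × ℝ/ℤ` into `M` converging at both ends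
(hence representing a class `α ∈ π₂(M)`) such that `∫ u*ω > 0`.  In particular a
closed symplectically aspherical manifold admits no nontrivial Hamiltonian
`S¹`-action. -/
theorem hamiltonian_circle_action_positive_spherical_area
    {E : Type*} [NormedAddCommGroup E] [NormedSpace ℝ E] [FiniteDimensional ℝ E]
    {M : Type*} [TopologicalSpace M] [ChartedSpace E M]
    [IsManifold 𝓘(ℝ, E) (⊤ : ℕ∞) M] [CompactSpace M] [T2Space M]
    (ω : ∀ x : M, TangentSpace 𝓘(ℝ, E) x →ₗ[ℝ] TangentSpace 𝓘(ℝ, E) x →ₗ[ℝ] ℝ)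
    (hanti : ∀ x v w, ω x v w = - ω x w v)
    (hnondeg : ∀ x v, (∀ w, ω x v w = 0) → v = 0)
    (hωsmooth : ∀ (n : ℕ) (f : EuclideanSpace ℝ (Fin n) → M),
      ContMDiff 𝓘(ℝ, EuclideanSpace ℝ (Fin n)) 𝓘(ℝ, E) (⊤ : ℕ∞) f →
      ∀ X Y : EuclideanSpace ℝ (Fin n),
        ContMDiff 𝓘(ℝ, EuclideanSpace ℝ (Fin n)) 𝓘(ℝ, ℝ) (⊤ : ℕ∞)
          (fun z => ω (f z)
            (mfderiv 𝓘(ℝ, EuclideanSpace ℝ (Fin n)) 𝓘(ℝ, E) f z X)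
            (mfderiv 𝓘(ℝ, EuclideanSpace ℝ (Fin n)) 𝓘(ℝ, E) f z Y)))
    (a : ℝ → M → M)
    (hasm : ContMDiff ((𝓘(ℝ, ℝ)).prod 𝓘(ℝ, E)) 𝓘(ℝ, E) (⊤ : ℕ∞)
      (fun p : ℝ × M => a p.1 p.2))
    (hadd : ∀ s t x, a (s + t) x = a s (a t x))
    (hzero : ∀ x, a 0 x = x)
    (hper : ∀ t x, a (t + 1) x = a t x)
    (hnontriv : ∃ t x, a t x ≠ x)
    (μ : M → ℝ)
    (hμsm : ContMDiff 𝓘(ℝ, E) 𝓘(ℝ, ℝ) (⊤ : ℕ∞) μ)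
    (hmoment : ∀ (x : M) (v : TangentSpace 𝓘(ℝ, E) x),
      mfderiv 𝓘(ℝ, E) 𝓘(ℝ, ℝ) μ x v
        = - ω x (mfderiv 𝓘(ℝ, ℝ) 𝓘(ℝ, E) (fun t => a t x) 0 ((1 : ℝ) : TangentSpace 𝓘(ℝ, ℝ) (0 : ℝ))) v) :
    ∃ (u : ℝ × ℝ → M) (p q : M),
      ContMDiff (𝓘(ℝ, ℝ × ℝ)) 𝓘(ℝ, E) (⊤ : ℕ∞) u ∧
      (∀ s t : ℝ, u (s, t + 1) = u (s, t)) ∧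
      Tendsto u (Filter.comap Prod.fst atBot) (nhds p) ∧
      Tendsto u (Filter.comap Prod.fst atTop) (nhds q) ∧
      0 < ∫ z in (Set.univ : Set ℝ) ×ˢ Set.Ioc (0:ℝ) 1,
          ω (u z)
            (mfderiv (𝓘(ℝ, ℝ × ℝ)) 𝓘(ℝ, E) u z ((1 : ℝ), (0 : ℝ)))
            (mfderiv (𝓘(ℝ, ℝ × ℝ)) 𝓘(ℝ, E) u z ((0 : ℝ), (1 : ℝ))) := by
  classical
  obtain ⟨t₀, x₀, hx₀⟩ := hnontriv
  have hone : (1 : WithTop ℕ∞) ≤ (↑(⊤ : ℕ∞) : WithTop ℕ∞) := by exact_mod_cast le_top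
  set X : M → E := fun x => mfderiv 𝓘(ℝ, ℝ) 𝓘(ℝ, E) (fun t => a t x) 0
    ((1 : ℝ) : TangentSpace 𝓘(ℝ, ℝ) (0 : ℝ)) with hXdef
  have hmom : ∀ (x : M) (v : E), mfderiv 𝓘(ℝ, E) 𝓘(ℝ, ℝ) μ x v = - ω x (X x) v :=
    fun x v => hmoment x v
  have hωself : ∀ (x : M) (v : E), ω x v v = 0 := by
    intro x v; have := hanti x v v; linarith
  have horb : ∀ x : M, ContMDiff 𝓘(ℝ, ℝ) 𝓘(ℝ, E) (⊤ : ℕ∞) (fun t => a t x) :=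
    fun x => hasm.comp (contMDiff_id.prodMk contMDiff_const)
  have horbd : ∀ (x : M) (t : ℝ), MDifferentiableAt 𝓘(ℝ, ℝ) 𝓘(ℝ, E) (fun t => a t x) t :=
    fun x t => (horb x).mdifferentiableAt (by simp)
  have hμd : ∀ y : M, MDifferentiableAt 𝓘(ℝ, E) 𝓘(ℝ, ℝ) μ y :=
    fun y => (hμsm y).mdifferentiableAt (by simp)
  -- key derivative identity  d/dt (a t x) = X (a t x)
  have hkey : ∀ (x : M) (t₁ : ℝ),
      mfderiv 𝓘(ℝ, ℝ) 𝓘(ℝ, E) (fun t => a t x) t₁ ((1 : ℝ) : TangentSpace 𝓘(ℝ, ℝ) t₁)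
        = X (a t₁ x) := by
    intro x t₁
    have hfun : (fun t => a t x) = (fun h => a h (a t₁ x)) ∘ (fun t => t - t₁) := by
      funext t
      simp only [Function.comp]
      rw [← hadd, sub_add_cancel]
    have h2 : HasMFDerivAt 𝓘(ℝ, ℝ) 𝓘(ℝ, ℝ) (fun t : ℝ => t - t₁) t₁
        (ContinuousLinearMap.id ℝ ℝ) :=
      ((hasFDerivAt_id t₁).sub_const t₁).hasMFDerivAt
    have h1 : HasMFDerivAt 𝓘(ℝ, ℝ) 𝓘(ℝ, E) (fun h => a h (a t₁ x)) (t₁ - t₁)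
        (mfderiv 𝓘(ℝ, ℝ) 𝓘(ℝ, E) (fun h => a h (a t₁ x)) 0) := by
      rw [sub_self t₁]
      exact (horbd (a t₁ x) 0).hasMFDerivAt
    have h3 : HasMFDerivAt 𝓘(ℝ, ℝ) 𝓘(ℝ, E)
        ((fun h => a h (a t₁ x)) ∘ fun t : ℝ => t - t₁) t₁
        ((mfderiv 𝓘(ℝ, ℝ) 𝓘(ℝ, E) (fun h => a h (a t₁ x)) 0).comp
          (ContinuousLinearMap.id ℝ ℝ)) :=
      HasMFDerivAt.comp (f := fun t : ℝ => t - t₁) t₁ h1 h2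
    rw [hfun, h3.mfderiv]
    rfl
  -- invariance of μ along the flow
  have hinv : ∀ (x : M) (t : ℝ), μ (a t x) = μ x := by
    intro x t
    have hsm : ContDiff ℝ (↑(⊤ : ℕ∞)) (μ ∘ fun t => a t x) := by
      rw [← contMDiff_iff_contDiff]
      exact hμsm.comp (horb x)
    have hd0 : ∀ t₁ : ℝ, fderiv ℝ (μ ∘ fun t => a t x) t₁ = 0 := by
      intro t₁
      apply ContinuousLinearMap.ext_ring
      rw [← mfderiv_eq_fderiv]
      rw [mfderiv_comp t₁ (hμd (a t₁ x)) (horbd x t₁)]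
      show (mfderiv 𝓘(ℝ, E) 𝓘(ℝ, ℝ) μ (a t₁ x))
          ((mfderiv 𝓘(ℝ, ℝ) 𝓘(ℝ, E) (fun t => a t x) t₁)
            ((1 : ℝ) : TangentSpace 𝓘(ℝ, ℝ) t₁)) = (0 : ℝ)
      rw [hkey x t₁, hmom (a t₁ x) (X (a t₁ x)), hωself, neg_zero]
    have := is_const_of_fderiv_eq_zero (hsm.differentiable (by simp)) hd0 t 0
    simpa [Function.comp, hzero x] using this
  -- vanishing vector field along an orbit makes it constant
  have hfix : ∀ x : M, (∀ t : ℝ, X (a t x) = 0) → ∀ t : ℝ, a t x = x := by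
    intro x hX0 t
    have hz : ∀ t₁ : ℝ, mfderiv 𝓘(ℝ, ℝ) 𝓘(ℝ, E) (fun t => a t x) t₁ = 0 := by
      intro t₁
      apply ContinuousLinearMap.ext_ring
      show mfderiv 𝓘(ℝ, ℝ) 𝓘(ℝ, E) (fun t => a t x) t₁
          ((1 : ℝ) : TangentSpace 𝓘(ℝ, ℝ) t₁) = (0 : E)
      rw [hkey x t₁, hX0 t₁]
    have := aux_const_of_mfderiv_zero (horb x) hz t
    rwa [hzero x] at this
  -- vanishing dμ forces X = 0
  have hXzero : ∀ y : M, mfderiv 𝓘(ℝ, E) 𝓘(ℝ, ℝ) μ y = 0 → X y = 0 := by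
    intro y hy
    apply hnondeg y
    intro w
    have h1 := hmom y w
    rw [hy] at h1
    simp only [ContinuousLinearMap.zero_apply] at h1
    exact neg_eq_zero.mp h1.symm
  have hXextr : ∀ y : M, IsLocalExtr μ y → X y = 0 :=
    fun y h => hXzero y (aux_mfderiv_zero_of_extr hμsm h)
  -- the connected component of x₀
  haveI : LocallyConnectedSpace M := ChartedSpace.locallyConnectedSpace E M
  have hCclopen : IsClopen (connectedComponent x₀) :=
    ⟨isClosed_connectedComponent, isOpen_connectedComponent⟩
  have hCcompact : IsCompact (connectedComponent x₀) :=
    isClosed_connectedComponent.isCompact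
  have hCne : (connectedComponent x₀).Nonempty := ⟨x₀, mem_connectedComponent⟩
  have horbC : ∀ x ∈ connectedComponent x₀, ∀ t : ℝ, a t x ∈ connectedComponent x₀ := by
    intro x hx t
    have hT : IsClopen ((fun t : ℝ => a t x) ⁻¹' connectedComponent x₀) :=
      hCclopen.preimage (horb x).continuous
    have hTne : ((fun t : ℝ => a t x) ⁻¹' connectedComponent x₀).Nonempty :=
      ⟨0, by simpa [hzero x] using hx⟩
    exact (Set.eq_univ_iff_forall.mp (hT.eq_univ hTne) t)
  obtain ⟨p, hpC, hpmin⟩ := hCcompact.exists_isMinOn hCne hμsm.continuous.continuousOn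
  obtain ⟨q, hqC, hqmax⟩ := hCcompact.exists_isMaxOn hCne hμsm.continuous.continuousOn
  have hplocmin : ∀ t : ℝ, IsLocalMin μ (a t p) := by
    intro t
    show ∀ᶠ z in nhds (a t p), μ (a t p) ≤ μ z
    filter_upwards [hCclopen.2.mem_nhds (horbC p hpC t)] with z hz
    rw [hinv p t]
    exact hpmin hz
  have hqlocmax : ∀ t : ℝ, IsLocalMax μ (a t q) := by
    intro t
    show ∀ᶠ z in nhds (a t q), μ z ≤ μ (a t q)
    filter_upwards [hCclopen.2.mem_nhds (horbC q hqC t)] with z hz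
    rw [hinv q t]
    exact hqmax hz
  have hpfix : ∀ t : ℝ, a t p = p := hfix p (fun t => hXextr _ (Or.inl (hplocmin t)))
  have hqfix : ∀ t : ℝ, a t q = q := hfix q (fun t => hXextr _ (Or.inr (hqlocmax t)))
  have hlt : μ p < μ q := by
    rcases lt_or_eq_of_le (show μ p ≤ μ q from hpmin hqC) with h | h
    · exact h
    · exfalso
      have hconstμ : ∀ y ∈ connectedComponent x₀, μ y = μ p := by
        intro y hy
        refine le_antisymm ?_ (hpmin hy)
        rw [h]; exact hqmax hy
      have hX0 : ∀ y ∈ connectedComponent x₀, X y = 0 := by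
        intro y hy
        apply hXzero
        have heq : μ =ᶠ[nhds y] fun _ => μ p := by
          filter_upwards [hCclopen.2.mem_nhds hy] with z hz using hconstμ z hz
        rw [heq.mfderiv_eq, mfderiv_const]; rfl
      exact hx₀ (hfix x₀ (fun t => hX0 _ (horbC x₀ mem_connectedComponent t)) t₀)
  -- smooth path from p to q
  have hqcc : q ∈ connectedComponent p := by
    have h := connectedComponent_eq hpC
    exact h ▸ hqC
  obtain ⟨c, hc, hc0, hc1⟩ := exists_smooth_path (E := E) hqcc
  -- the cylinder
  set u : ℝ × ℝ → M := fun z => a z.2 (c z.1) with hudef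
  have hfst : ContMDiff 𝓘(ℝ, ℝ × ℝ) 𝓘(ℝ, ℝ) (⊤ : ℕ∞) (Prod.fst : ℝ × ℝ → ℝ) := by
    rw [contMDiff_iff_contDiff]; fun_prop
  have hsnd : ContMDiff 𝓘(ℝ, ℝ × ℝ) 𝓘(ℝ, ℝ) (⊤ : ℕ∞) (Prod.snd : ℝ × ℝ → ℝ) := by
    rw [contMDiff_iff_contDiff]; fun_prop
  have husm : ContMDiff 𝓘(ℝ, ℝ × ℝ) 𝓘(ℝ, E) (⊤ : ℕ∞) u :=
    hasm.comp (hsnd.prodMk (hc.comp hfst))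
  have huD : ∀ z : ℝ × ℝ, HasMFDerivAt 𝓘(ℝ, ℝ × ℝ) 𝓘(ℝ, E) u z
      (mfderiv 𝓘(ℝ, ℝ × ℝ) 𝓘(ℝ, E) u z) :=
    fun z => ((husm z).mdifferentiableAt (by simp)).hasMFDerivAt
  have hslice1 : ∀ s t : ℝ,
      mfderiv 𝓘(ℝ, ℝ × ℝ) 𝓘(ℝ, E) u (s, t) ((1 : ℝ), (0 : ℝ))
        = mfderiv 𝓘(ℝ, ℝ) 𝓘(ℝ, E) (fun σ => a t (c σ)) s ((1 : ℝ) : TangentSpace 𝓘(ℝ, ℝ) s) := by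
    intro s t
    have hι : HasMFDerivAt 𝓘(ℝ, ℝ) 𝓘(ℝ, ℝ × ℝ) (fun σ : ℝ => (σ, t)) s
        ((ContinuousLinearMap.id ℝ ℝ).prod (0 : ℝ →L[ℝ] ℝ)) :=
      ((hasFDerivAt_id s).prodMk (hasFDerivAt_const t s)).hasMFDerivAt
    have hcomp : HasMFDerivAt 𝓘(ℝ, ℝ) 𝓘(ℝ, E) (u ∘ fun σ : ℝ => (σ, t)) s
        ((mfderiv 𝓘(ℝ, ℝ × ℝ) 𝓘(ℝ, E) u (s, t)).comp
          ((ContinuousLinearMap.id ℝ ℝ).prod (0 : ℝ →L[ℝ] ℝ))) :=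
      (huD (s, t)).comp s hι
    have h4 : mfderiv 𝓘(ℝ, ℝ) 𝓘(ℝ, E) (fun σ => a t (c σ)) s
        = (mfderiv 𝓘(ℝ, ℝ × ℝ) 𝓘(ℝ, E) u (s, t)).comp
          ((ContinuousLinearMap.id ℝ ℝ).prod (0 : ℝ →L[ℝ] ℝ)) := by
      show mfderiv 𝓘(ℝ, ℝ) 𝓘(ℝ, E) (u ∘ fun σ : ℝ => (σ, t)) s = _
      exact hcomp.mfderiv
    rw [h4]
    rfl
  have hslice2 : ∀ s t : ℝ,
      mfderiv 𝓘(ℝ, ℝ × ℝ) 𝓘(ℝ, E) u (s, t) ((0 : ℝ), (1 : ℝ))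
        = mfderiv 𝓘(ℝ, ℝ) 𝓘(ℝ, E) (fun τ => a τ (c s)) t ((1 : ℝ) : TangentSpace 𝓘(ℝ, ℝ) t) := by
    intro s t
    have hι : HasMFDerivAt 𝓘(ℝ, ℝ) 𝓘(ℝ, ℝ × ℝ) (fun τ : ℝ => (s, τ)) t
        ((0 : ℝ →L[ℝ] ℝ).prod (ContinuousLinearMap.id ℝ ℝ)) :=
      ((hasFDerivAt_const s t).prodMk (hasFDerivAt_id t)).hasMFDerivAt
    have hcomp : HasMFDerivAt 𝓘(ℝ, ℝ) 𝓘(ℝ, E) (u ∘ fun τ : ℝ => (s, τ)) t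
        ((mfderiv 𝓘(ℝ, ℝ × ℝ) 𝓘(ℝ, E) u (s, t)).comp
          ((0 : ℝ →L[ℝ] ℝ).prod (ContinuousLinearMap.id ℝ ℝ))) :=
      (huD (s, t)).comp t hι
    have h4 : mfderiv 𝓘(ℝ, ℝ) 𝓘(ℝ, E) (fun τ => a τ (c s)) t
        = (mfderiv 𝓘(ℝ, ℝ × ℝ) 𝓘(ℝ, E) u (s, t)).comp
          ((0 : ℝ →L[ℝ] ℝ).prod (ContinuousLinearMap.id ℝ ℝ)) := by
      show mfderiv 𝓘(ℝ, ℝ) 𝓘(ℝ, E) (u ∘ fun τ : ℝ => (s, τ)) t = _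
      exact hcomp.mfderiv
    rw [h4]
    rfl
  -- smoothness of μ ∘ c
  have hμcsmooth : ContDiff ℝ (↑(⊤ : ℕ∞)) (fun σ : ℝ => μ (c σ)) := by
    rw [← contMDiff_iff_contDiff]
    exact hμsm.comp hc
  have hμcdiff : ∀ x : ℝ, DifferentiableAt ℝ (fun σ : ℝ => μ (c σ)) x :=
    fun x => (hμcsmooth.differentiable (by simp)).differentiableAt
  set g : ℝ → ℝ := deriv (fun σ : ℝ => μ (c σ)) with hgdef
  have hgcont : Continuous g := hμcsmooth.continuous_deriv hone
  -- the integrand identity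
  have hF : ∀ z : ℝ × ℝ,
      ω (u z) (mfderiv 𝓘(ℝ, ℝ × ℝ) 𝓘(ℝ, E) u z ((1 : ℝ), (0 : ℝ)))
        (mfderiv 𝓘(ℝ, ℝ × ℝ) 𝓘(ℝ, E) u z ((0 : ℝ), (1 : ℝ))) = g z.1 := by
    rintro ⟨s, t⟩
    rw [hslice1 s t, hslice2 s t, hkey (c s) t]
    have hu_eq : u (s, t) = a t (c s) := rfl
    erw [hu_eq, hanti, ← hmom (a t (c s))]
    have hcd : MDifferentiableAt 𝓘(ℝ, ℝ) 𝓘(ℝ, E) (fun σ => a t (c σ)) s :=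
      (hasm.comp (contMDiff_const.prodMk hc)).mdifferentiableAt (by simp)
    have hcomp := mfderiv_comp (I := 𝓘(ℝ, ℝ)) (I' := 𝓘(ℝ, E)) (I'' := 𝓘(ℝ, ℝ)) s
      (hμd (a t (c s))) hcd
    beta_reduce at hcomp
    have h2 : mfderiv 𝓘(ℝ, E) 𝓘(ℝ, ℝ) μ (a t (c s))
        (mfderiv 𝓘(ℝ, ℝ) 𝓘(ℝ, E) (fun σ => a t (c σ)) s ((1 : ℝ) : TangentSpace 𝓘(ℝ, ℝ) s))
        = mfderiv 𝓘(ℝ, ℝ) 𝓘(ℝ, ℝ) (μ ∘ fun σ => a t (c σ)) s ((1 : ℝ) : TangentSpace 𝓘(ℝ, ℝ) s) := by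
      rw [hcomp]
      simp [ContinuousLinearMap.coe_comp']; rfl
    rw [h2]
    have h3 : (μ ∘ fun σ => a t (c σ)) = fun σ => μ (c σ) := by
      funext σ
      simp only [Function.comp_apply]
      exact hinv (c σ) t
    rw [h3]
    have h6 : mfderiv 𝓘(ℝ, ℝ) 𝓘(ℝ, ℝ) (fun σ : ℝ => μ (c σ)) s
        = fderiv ℝ (fun σ : ℝ => μ (c σ)) s := mfderiv_eq_fderiv
    rw [hgdef]
    exact (congrArg (fun L : ℝ →L[ℝ] ℝ => L 1) h6).trans fderiv_apply_one_eq_deriv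
  -- g vanishes outside Ioc 0 1
  have hgneg : ∀ x : ℝ, x < 0 → g x = 0 := by
    intro x hx
    have heq : (fun σ : ℝ => μ (c σ)) =ᶠ[nhds x] fun _ => μ p := by
      filter_upwards [Iio_mem_nhds hx] with z hz
      rw [hc0 z (le_of_lt hz)]
    rw [hgdef, heq.deriv_eq, deriv_const]
  have hggt : ∀ x : ℝ, 1 < x → g x = 0 := by
    intro x hx
    have heq : (fun σ : ℝ => μ (c σ)) =ᶠ[nhds x] fun _ => μ q := by
      filter_upwards [Ioi_mem_nhds hx] with z hz
      rw [hc1 z (le_of_lt hz)]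
    rw [hgdef, heq.deriv_eq, deriv_const]
  have hg00 : g 0 = 0 := by
    have ht1 : Filter.Tendsto g (nhdsWithin (0 : ℝ) (Set.Iio 0)) (nhds (g 0)) :=
      (hgcont.continuousAt).continuousWithinAt
    have ht2 : Filter.Tendsto g (nhdsWithin (0 : ℝ) (Set.Iio 0)) (nhds 0) := by
      apply Filter.Tendsto.congr' _ tendsto_const_nhds
      filter_upwards [self_mem_nhdsWithin] with x hx
      exact (hgneg x hx).symm
    exact tendsto_nhds_unique ht1 ht2
  have hgzero : ∀ x : ℝ, x ∉ Set.Ioc (0 : ℝ) 1 → g x = 0 := by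
    intro x hx
    rw [Set.mem_Ioc, not_and_or] at hx
    rcases hx with hx | hx
    · push_neg at hx
      rcases lt_or_eq_of_le hx with h | h
      · exact hgneg x h
      · rw [h]; exact hg00
    · push_neg at hx
      exact hggt x hx
  -- the total integral
  have hIoc : ∫ s in Set.Ioc (0 : ℝ) 1, g s = μ q - μ p := by
    rw [← intervalIntegral.integral_of_le (zero_le_one), hgdef]
    rw [intervalIntegral.integral_deriv_eq_sub (fun x _ => hμcdiff x)
      ((hμcsmooth.continuous_deriv hone).intervalIntegrable 0 1)]
    rw [hc1 1 le_rfl, hc0 0 le_rfl]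
  have htotal : ∫ s : ℝ, g s = μ q - μ p := by
    rw [← MeasureTheory.setIntegral_eq_integral_of_forall_compl_eq_zero hgzero]
    exact hIoc
  refine ⟨u, p, q, husm, ?_, ?_, ?_, ?_⟩
  · intro s t
    show a (t + 1) (c s) = a t (c s)
    exact hper t (c s)
  · have hev : ∀ᶠ z : ℝ × ℝ in Filter.comap Prod.fst Filter.atBot, u z = p := by
      filter_upwards [Filter.preimage_mem_comap (Filter.Iic_mem_atBot (0 : ℝ))] with z hz
      show a z.2 (c z.1) = p
      rw [hc0 z.1 hz, hpfix z.2]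
    exact Filter.Tendsto.congr' (hev.mono fun z hz => hz.symm) tendsto_const_nhds
  · have hev : ∀ᶠ z : ℝ × ℝ in Filter.comap Prod.fst Filter.atTop, u z = q := by
      filter_upwards [Filter.preimage_mem_comap (Filter.Ici_mem_atTop (1 : ℝ))] with z hz
      show a z.2 (c z.1) = q
      rw [hc1 z.1 hz, hqfix z.2]
    exact Filter.Tendsto.congr' (hev.mono fun z hz => hz.symm) tendsto_const_nhds
  · simp only [hF]
    have hprod : (∫ z : ℝ × ℝ in (Set.univ : Set ℝ) ×ˢ Set.Ioc (0 : ℝ) 1, g z.1)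
        = (∫ s : ℝ, g s) * ∫ t in Set.Ioc (0 : ℝ) 1, (1 : ℝ) := by
      rw [MeasureTheory.Measure.volume_eq_prod, ← MeasureTheory.Measure.prod_restrict,
        MeasureTheory.Measure.restrict_univ]
      have h := MeasureTheory.integral_prod_mul (μ := (MeasureTheory.volume : MeasureTheory.Measure ℝ))
        (ν := (MeasureTheory.volume : MeasureTheory.Measure ℝ).restrict (Set.Ioc (0 : ℝ) 1)) g
        (fun _ => (1 : ℝ))
      simpa [mul_one] using h
    rw [hprod, htotal]
    simp only [MeasureTheory.integral_const, MeasureTheory.Measure.restrict_apply,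
      Set.univ_inter, Real.volume_Ioc, smul_eq_mul, mul_one]
    norm_num
    linarith
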